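/- arXiv:1204.6578 — 3 statements merged into one kernel-verified Lean document; each statement's English description precedes it below -/
import Mathlib

section
/- Let K ⊆ ℝ^N be a nonempty convex open bounded set, l ∈ (0,1), λ > 0. Let (u₁, Ω₁) and (u₂, Ω₂) be two supersolutions for problem (P_E). Then Ω₁ ∩ Ω₂ is again a supersolution: every p-capacitary potential u of (Ω₁ ∩ Ω₂) \ closure(K) satisfies dist(x, {u = l}) ≥ λ for all x ∈ ∂(Ω₁ ∩ Ω₂). -/
open Metric Set Filter MeasureTheory Topology Bornology
open scoped RealInnerProductSpace ENNReal Pointwise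

noncomputable section

abbrev Euc (N : ℕ) := EuclideanSpace ℝ (Fin N)

variable {N : ℕ}

/-- `u` is weakly `p`-harmonic on the open set `U`: it is `C¹` on `U` and the weak form of
the `p`-Laplace equation holds against all smooth compactly supported test functions. -/
def WeaklyPHarmonicOn (p : ℝ) (u : Euc N → ℝ) (U : Set (Euc N)) : Prop :=
  ContDiffOn ℝ 1 u U ∧
    ∀ φ : Euc N → ℝ, ContDiff ℝ (⊤ : ℕ∞) φ → HasCompactSupport φ → tsupport φ ⊆ U →
      ∫ x in U, ‖gradient u x‖ ^ (p - 2) * ⟪gradient u x, gradient φ x⟫ = 0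

/-- `u` is a `p`-capacitary potential of the ring `Ω \ closure K`: continuous on `closure Ω`,
`0 ≤ u ≤ 1`, `u = 1` on `closure K`, `u = 0` outside `Ω`, weakly `p`-harmonic in the ring. -/
def IsCapPotential (p : ℝ) (K Ω : Set (Euc N)) (u : Euc N → ℝ) : Prop :=
  ContinuousOn u (closure Ω) ∧ (∀ x, 0 ≤ u x ∧ u x ≤ 1) ∧
    (∀ x ∈ closure K, u x = 1) ∧ (∀ x ∉ Ω, u x = 0) ∧
    WeaklyPHarmonicOn p u (Ω \ closure K)

namespace SuperAux

open ContinuousLinearMap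
open scoped Convolution

variable {N : ℕ} {p : ℝ}

/-- The `p`-Laplacian vector field. -/
def Amap (p : ℝ) (ξ : Euc N) : Euc N := ‖ξ‖ ^ (p - 2) • ξ

lemma rpow_mul_self (hp : 1 < p) {a : ℝ} (ha : 0 ≤ a) : a ^ (p - 2) * (a * a) = a ^ p := by
  rcases ha.eq_or_lt with rfl | h
  · simp [Real.zero_rpow (show p ≠ 0 by linarith)]
  · have h2 : a * a = a ^ (2 : ℝ) := by
      rw [show (2:ℝ) = ((2:ℕ):ℝ) by norm_num, Real.rpow_natCast]; ring
    rw [h2, ← Real.rpow_add h, show p - 2 + 2 = p by ring]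

lemma rpow_mul_one (hp : 1 < p) {a : ℝ} (ha : 0 ≤ a) : a ^ (p - 2) * a = a ^ (p - 1) := by
  rcases ha.eq_or_lt with rfl | h
  · simp [Real.zero_rpow (show p - 1 ≠ 0 by intro hc; linarith)]
  · conv_lhs => rw [show a ^ (p-2) * a = a ^ (p-2) * a ^ (1:ℝ) by rw [Real.rpow_one]]
    rw [← Real.rpow_add h]
    rw [show p - 2 + 1 = p - 1 by ring]

lemma rpow_pm1_mul (hp : 1 < p) {a : ℝ} (ha : 0 ≤ a) : a ^ (p - 1) * a = a ^ p := by
  rcases ha.eq_or_lt with rfl | h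
  · simp [Real.zero_rpow (show p ≠ 0 by linarith)]
  · conv_lhs => rw [show a ^ (p-1) * a = a ^ (p-1) * a ^ (1:ℝ) by rw [Real.rpow_one]]
    rw [← Real.rpow_add h]
    rw [show p - 1 + 1 = p by ring]

lemma continuous_Amap (hp : 1 < p) : Continuous (Amap (N := N) p) := by
  rw [continuous_iff_continuousAt]
  intro ξ
  rcases eq_or_ne ξ 0 with rfl | hξ
  · have h0 : Amap p (0 : Euc N) = 0 := by simp [Amap]
    have hb : ∀ η : Euc N, ‖Amap p η‖ ≤ ‖η‖ ^ (p - 1) := by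
      intro η
      rcases eq_or_ne η 0 with rfl | hη
      · simp [Amap, Real.zero_rpow (show p - 1 ≠ 0 by intro hc; linarith)]
      · refine le_of_eq ?_
        rw [Amap, norm_smul, Real.norm_eq_abs,
          abs_of_nonneg (Real.rpow_nonneg (norm_nonneg _) _), rpow_mul_one hp (norm_nonneg η)]
    have hcont : ContinuousAt (fun x : ℝ => x ^ (p - 1)) 0 :=
      Real.continuousAt_rpow_const 0 _ (Or.inr (by linarith))
    have htend : Tendsto (fun η : Euc N => ‖η‖ ^ (p - 1)) (𝓝 0) (𝓝 0) := by
      have h1 : Tendsto (fun η : Euc N => ‖η‖) (𝓝 0) (𝓝 0) := by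
        simpa using continuous_norm.tendsto (0 : Euc N)
      have h2 := (hcont.tendsto).comp h1
      simpa [Function.comp_def, Real.zero_rpow (show p - 1 ≠ 0 by intro hc; linarith)] using h2
    have : Tendsto (Amap (N := N) p) (𝓝 0) (𝓝 0) := squeeze_zero_norm hb htend
    simpa [ContinuousAt, h0] using this
  · have hn : ‖ξ‖ ≠ 0 := norm_ne_zero_iff.mpr hξ
    have h1 : ContinuousAt (fun η : Euc N => ‖η‖ ^ (p - 2)) ξ :=
      (Real.continuousAt_rpow_const _ _ (Or.inl hn)).comp continuous_norm.continuousAt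
    exact h1.smul continuousAt_id

lemma inner_Amap_core (hp : 1 < p) (ξ η : Euc N) :
    ⟪Amap p ξ - Amap p η, ξ - η⟫ =
      ‖ξ‖ ^ p + ‖η‖ ^ p - (‖ξ‖ ^ (p - 2) + ‖η‖ ^ (p - 2)) * ⟪ξ, η⟫ := by
  simp only [Amap, inner_sub_left, inner_sub_right, real_inner_smul_left]
  rw [real_inner_self_eq_norm_mul_norm, real_inner_self_eq_norm_mul_norm,
    rpow_mul_self hp (norm_nonneg ξ), rpow_mul_self hp (norm_nonneg η),
    real_inner_comm η ξ]
  ring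

lemma inner_Amap_ge (hp : 1 < p) (ξ η : Euc N) :
    (‖ξ‖ ^ (p - 1) - ‖η‖ ^ (p - 1)) * (‖ξ‖ - ‖η‖) ≤ ⟪Amap p ξ - Amap p η, ξ - η⟫ := by
  rw [inner_Amap_core hp]
  have ha0 : (0:ℝ) ≤ ‖ξ‖ := norm_nonneg ξ
  have hb0 : (0:ℝ) ≤ ‖η‖ := norm_nonneg η
  have hip : ⟪ξ, η⟫ ≤ ‖ξ‖ * ‖η‖ := real_inner_le_norm ξ η
  have hco : 0 ≤ ‖ξ‖ ^ (p-2) + ‖η‖ ^ (p-2) :=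
    add_nonneg (Real.rpow_nonneg ha0 _) (Real.rpow_nonneg hb0 _)
  have h1 : (‖ξ‖^(p-2) + ‖η‖^(p-2)) * ⟪ξ,η⟫ ≤ (‖ξ‖^(p-2) + ‖η‖^(p-2)) * (‖ξ‖*‖η‖) :=
    mul_le_mul_of_nonneg_left hip hco
  have e1 : ‖ξ‖^(p-2) * (‖ξ‖*‖η‖) = ‖ξ‖^(p-1) * ‖η‖ := by
    rw [← mul_assoc, rpow_mul_one hp ha0]
  have e2 : ‖η‖^(p-2) * (‖ξ‖*‖η‖) = ‖η‖^(p-1) * ‖ξ‖ := by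
    rw [mul_comm ‖ξ‖ ‖η‖, ← mul_assoc, rpow_mul_one hp hb0]
  have e3 : ‖ξ‖^(p-1) * ‖ξ‖ = ‖ξ‖^p := rpow_pm1_mul hp ha0
  have e4 : ‖η‖^(p-1) * ‖η‖ = ‖η‖^p := rpow_pm1_mul hp hb0
  calc (‖ξ‖^(p-1) - ‖η‖^(p-1)) * (‖ξ‖ - ‖η‖)
      = ‖ξ‖^p + ‖η‖^p - (‖ξ‖^(p-1)*‖η‖ + ‖η‖^(p-1)*‖ξ‖) := by rw [← e3, ← e4]; ring
    _ = ‖ξ‖^p + ‖η‖^p - (‖ξ‖^(p-2)+‖η‖^(p-2))*(‖ξ‖*‖η‖) := by rw [add_mul, e1, e2]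
    _ ≤ ‖ξ‖^p + ‖η‖^p - (‖ξ‖^(p-2)+‖η‖^(p-2))*⟪ξ,η⟫ := by linarith

lemma inner_Amap_nonneg (hp : 1 < p) (ξ η : Euc N) :
    0 ≤ ⟪Amap p ξ - Amap p η, ξ - η⟫ := by
  refine le_trans ?_ (inner_Amap_ge hp ξ η)
  rcases le_total ‖ξ‖ ‖η‖ with h | h
  · have h1 : 0 ≤ (‖η‖^(p-1) - ‖ξ‖^(p-1)) * (‖η‖ - ‖ξ‖) :=
      mul_nonneg (sub_nonneg.2 (Real.rpow_le_rpow (norm_nonneg _) h (by linarith)))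
        (sub_nonneg.2 h)
    nlinarith [h1]
  · have h1 : 0 ≤ (‖ξ‖^(p-1) - ‖η‖^(p-1)) * (‖ξ‖ - ‖η‖) :=
      mul_nonneg (sub_nonneg.2 (Real.rpow_le_rpow (norm_nonneg _) h (by linarith)))
        (sub_nonneg.2 h)
    exact h1

lemma eq_of_inner_Amap_eq_zero (hp : 1 < p) {ξ η : Euc N}
    (h : ⟪Amap p ξ - Amap p η, ξ - η⟫ = 0) : ξ = η := by
  by_contra hne
  rcases eq_or_ne ‖ξ‖ ‖η‖ with hab | hab
  · have hpos : 0 < ‖ξ‖ := by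
      rcases (norm_nonneg ξ).eq_or_lt with h0 | h0
      · exfalso
        apply hne
        have hξ0 : ξ = 0 := norm_eq_zero.mp h0.symm
        have hη0 : η = 0 := norm_eq_zero.mp (by rw [← hab, ← h0])
        rw [hξ0, hη0]
      · exact h0
    have hcore := inner_Amap_core hp ξ η
    rw [h, ← hab] at hcore
    have hd : 0 < ‖ξ - η‖ := norm_pos_iff.mpr (sub_ne_zero.mpr hne)
    have hsq : ‖ξ - η‖ ^ 2 = ‖ξ‖ ^ 2 - 2 * ⟪ξ, η⟫ + ‖η‖ ^ 2 := norm_sub_sq_real ξ η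
    rw [← hab] at hsq
    have hip : ⟪ξ, η⟫ < ‖ξ‖ * ‖ξ‖ := by nlinarith [mul_pos hd hd, sq_nonneg ‖ξ - η‖]
    have hr : (0:ℝ) < ‖ξ‖ ^ (p-2) := Real.rpow_pos_of_pos hpos _
    have hA : ‖ξ‖^p = ‖ξ‖^(p-2) * (‖ξ‖*‖ξ‖) := (rpow_mul_self hp (norm_nonneg ξ)).symm
    nlinarith [mul_pos hr (sub_pos.2 hip)]
  · have hge := inner_Amap_ge hp ξ η
    rw [h] at hge
    have : 0 < (‖ξ‖^(p-1) - ‖η‖^(p-1)) * (‖ξ‖ - ‖η‖) := by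
      rcases hab.lt_or_gt with hlt | hlt
      · have := Real.rpow_lt_rpow (norm_nonneg ξ) hlt (by linarith : (0:ℝ) < p - 1)
        nlinarith
      · have := Real.rpow_lt_rpow (norm_nonneg η) hlt (by linarith : (0:ℝ) < p - 1)
        nlinarith
    linarith

lemma cont_global {Ω : Set (Euc N)} (hΩ : IsOpen Ω) {u : Euc N → ℝ}
    (hc : ContinuousOn u (closure Ω)) (h0 : ∀ x ∉ Ω, u x = 0) : Continuous u := by
  rw [continuous_iff_continuousAt]
  intro x
  by_cases hx : x ∈ Ω
  · exact hc.continuousAt (mem_of_superset (hΩ.mem_nhds hx) subset_closure)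
  · by_cases hx' : x ∈ closure Ω
    · have hux : u x = 0 := h0 x hx
      have h1 : ContinuousWithinAt u (closure Ω) x := hc x hx'
      have h2 : ContinuousWithinAt u Ωᶜ x := by
        have hconst : ContinuousWithinAt (fun _ : Euc N => (0:ℝ)) Ωᶜ x := continuousWithinAt_const
        exact hconst.congr (fun y hy => h0 y hy) hux
      have h3 := h1.union h2
      have hcover : (univ : Set (Euc N)) ⊆ closure Ω ∪ Ωᶜ := by
        intro y _
        by_cases h : y ∈ Ω
        · exact Or.inl (subset_closure h)
        · exact Or.inr h
      have h4 : ContinuousWithinAt u univ x := h3.mono hcover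
      rwa [continuousWithinAt_univ] at h4
    · have hop : IsOpen (closure Ω)ᶜ := isClosed_closure.isOpen_compl
      have hev : u =ᶠ[𝓝 x] (fun _ => 0) := by
        filter_upwards [hop.mem_nhds hx'] with y hy
        exact h0 y fun hmem => hy (subset_closure hmem)
      exact ContinuousAt.congr continuousAt_const hev.symm

lemma sq_posPart_hasDerivAt (t : ℝ) :
    HasDerivAt (fun s : ℝ => max s 0 ^ 2) (2 * max t 0) t := by
  rcases lt_trichotomy t 0 with h | rfl | h
  · have hev : (fun s : ℝ => max s 0 ^ 2) =ᶠ[𝓝 t] fun _ => 0 := by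
      filter_upwards [Iio_mem_nhds h] with s hs
      simp [max_eq_right (le_of_lt (mem_Iio.mp hs))]
    have h2 := (hasDerivAt_const t (0:ℝ)).congr_of_eventuallyEq hev
    simpa [max_eq_right h.le] using h2
  · rw [hasDerivAt_iff_tendsto_slope]
    have hcont : Tendsto (fun s : ℝ => max s 0) (𝓝[≠] (0:ℝ)) (𝓝 (0:ℝ)) := by
      have h1 : Tendsto (fun s : ℝ => max s 0) (𝓝 (0:ℝ)) (𝓝 (max (0:ℝ) 0)) :=
        (continuous_id.max continuous_const).tendsto 0
      simpa using h1.mono_left nhdsWithin_le_nhds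
    have hev : (fun s : ℝ => max s 0) =ᶠ[𝓝[≠] (0:ℝ)] slope (fun s : ℝ => max s 0 ^ 2) 0 := by
      filter_upwards [self_mem_nhdsWithin] with s hs
      have hs0 : (s : ℝ) ≠ 0 := hs
      have hssq : max s 0 ^ 2 = s * max s 0 := by
        rcases le_total s 0 with h | h
        · rw [max_eq_right h]; ring
        · rw [max_eq_left h]; ring
      rw [slope_def_field, hssq]
      rw [show max (0:ℝ) 0 ^ 2 = 0 by simp, sub_zero, sub_zero, mul_comm,
        mul_div_assoc, div_self hs0, mul_one]
    have h3 := hcont.congr' hev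
    simpa using h3
  · have hev : (fun s : ℝ => max s 0 ^ 2) =ᶠ[𝓝 t] fun s => s ^ 2 := by
      filter_upwards [Ioi_mem_nhds h] with s hs
      simp [max_eq_left (le_of_lt (mem_Ioi.mp hs))]
    have h2 := (hasDerivAt_pow 2 t).congr_of_eventuallyEq hev
    simpa [max_eq_left h.le] using h2

lemma sq_posPart_contDiff : ContDiff ℝ 1 (fun t : ℝ => max t 0 ^ 2) := by
  rw [contDiff_one_iff_deriv]
  constructor
  · exact fun t => (sq_posPart_hasDerivAt t).differentiableAt
  · have hd : deriv (fun s : ℝ => max s 0 ^ 2) = fun t => 2 * max t 0 :=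
      funext fun t => (sq_posPart_hasDerivAt t).deriv
    rw [hd]
    exact continuous_const.mul (continuous_id.max continuous_const)

lemma lsmul_precompR_eq (N : ℕ) :
    ((ContinuousLinearMap.lsmul ℝ ℝ : ℝ →L[ℝ] ℝ →L[ℝ] ℝ).precompR (Euc N)
      : ℝ →L[ℝ] (Euc N →L[ℝ] ℝ) →L[ℝ] (Euc N →L[ℝ] ℝ))
    = ContinuousLinearMap.lsmul ℝ ℝ := by
  apply ContinuousLinearMap.ext; intro r
  apply ContinuousLinearMap.ext; intro T
  apply ContinuousLinearMap.ext; intro y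
  simp [ContinuousLinearMap.precompR]

lemma fderiv_bump_convolution (ρ : ContDiffBump (0 : Euc N)) {v : Euc N → ℝ}
    (hv : ContDiff ℝ 1 v) (hsupp : HasCompactSupport v) (z : Euc N) :
    fderiv ℝ (ρ.normed volume ⋆[ContinuousLinearMap.lsmul ℝ ℝ, volume] v) z
      = ((ρ.normed volume) ⋆[(ContinuousLinearMap.lsmul ℝ ℝ
        : ℝ →L[ℝ] (Euc N →L[ℝ] ℝ) →L[ℝ] (Euc N →L[ℝ] ℝ)), volume] fderiv ℝ v) z := by
  rw [(hsupp.hasFDerivAt_convolution_right _ (ρ.integrable_normed.locallyIntegrable) hv z).fderiv,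
    lsmul_precompR_eq]

lemma bump_convolution_fderiv_bound (ρ : ContDiffBump (0 : Euc N)) {v : Euc N → ℝ}
    (hv : ContDiff ℝ 1 v) (hsupp : HasCompactSupport v) {C : ℝ}
    (hC : ∀ y, ‖fderiv ℝ v y‖ ≤ C) (z : Euc N) :
    ‖fderiv ℝ (ρ.normed volume ⋆[ContinuousLinearMap.lsmul ℝ ℝ, volume] v) z‖ ≤ 3 * C := by
  rw [fderiv_bump_convolution ρ hv hsupp z]
  have hDvcont : Continuous (fderiv ℝ v) := hv.continuous_fderiv one_ne_zero
  have hdist : dist (((ρ.normed volume) ⋆[(ContinuousLinearMap.lsmul ℝ ℝ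
      : ℝ →L[ℝ] (Euc N →L[ℝ] ℝ) →L[ℝ] (Euc N →L[ℝ] ℝ)), volume] fderiv ℝ v) z)
      (fderiv ℝ v z) ≤ 2 * C := by
    apply ContDiffBump.dist_normed_convolution_le hDvcont.aestronglyMeasurable
    intro y _
    calc dist (fderiv ℝ v y) (fderiv ℝ v z) ≤ ‖fderiv ℝ v y‖ + ‖fderiv ℝ v z‖ :=
        dist_le_norm_add_norm _ _
      _ ≤ 2 * C := by linarith [hC y, hC z]
  have htri := norm_sub_norm_le (((ρ.normed volume) ⋆[(ContinuousLinearMap.lsmul ℝ ℝ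
      : ℝ →L[ℝ] (Euc N →L[ℝ] ℝ) →L[ℝ] (Euc N →L[ℝ] ℝ)), volume] fderiv ℝ v) z)
    (fderiv ℝ v z)
  rw [← dist_eq_norm] at htri
  linarith [hC z]

lemma bump_convolution_fderiv_tendsto (ρ : ℕ → ContDiffBump (0 : Euc N))
    (hr : Tendsto (fun n => (ρ n).rOut) atTop (𝓝 0)) {v : Euc N → ℝ}
    (hv : ContDiff ℝ 1 v) (hsupp : HasCompactSupport v) (z : Euc N) :
    Tendsto (fun n =>
        fderiv ℝ ((ρ n).normed volume ⋆[ContinuousLinearMap.lsmul ℝ ℝ, volume] v) z)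
      atTop (𝓝 (fderiv ℝ v z)) := by
  have h1 := ContDiffBump.convolution_tendsto_right_of_continuous (μ := volume)
    (φ := ρ) hr (hv.continuous_fderiv one_ne_zero) z
  exact h1.congr fun n => (fderiv_bump_convolution (ρ n) hv hsupp z).symm

set_option maxHeartbeats 1000000 in
/-- Weak comparison principle for the `p`-Laplacian. -/
theorem comparison (hp : 1 < p) {U V : Set (Euc N)}
    (hUo : IsOpen U) (hVo : IsOpen V) (hUV : U ⊆ V) (hUb : IsBounded U)
    (hne : ∃ z : Euc N, z ∉ U)
    {u w : Euc N → ℝ} (hu : Continuous u) (hw : Continuous w)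
    (hphu : WeaklyPHarmonicOn p u U) (hphw : WeaklyPHarmonicOn p w V)
    (hbd : ∀ x ∉ U, u x ≤ w x) : ∀ x, u x ≤ w x := by
  intro x₀
  refine le_of_forall_pos_le_add fun ε hε => ?_
  by_contra hcon
  push_neg at hcon
  set g : Euc N → ℝ := fun z => u z - w z - ε with hg_def
  have hgc : Continuous g := (hu.sub hw).sub continuous_const
  have hgout : ∀ z ∉ U, g z ≤ -ε := by
    intro z hz
    have := hbd z hz
    simp only [hg_def]
    linarith
  have hgx : 0 < g x₀ := by simp only [hg_def]; linarith
  -- differentiability setup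
  have hudiff : ∀ z ∈ U, DifferentiableAt ℝ u z := fun z hz =>
    (hphu.1.contDiffAt (hUo.mem_nhds hz)).differentiableAt one_ne_zero
  have hwdiff : ∀ z ∈ U, DifferentiableAt ℝ w z := fun z hz =>
    (hphw.1.contDiffAt (hVo.mem_nhds (hUV hz))).differentiableAt one_ne_zero
  have hgF : ∀ z ∈ U, HasFDerivAt g (fderiv ℝ u z - fderiv ℝ w z) z := fun z hz =>
    ((hudiff z hz).hasFDerivAt.sub (hwdiff z hz).hasFDerivAt).sub_const ε
  -- compact support set
  set S : Set (Euc N) := {z | 0 ≤ g z} with hS_def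
  have hSclosed : IsClosed S := isClosed_le continuous_const hgc
  have hSU : S ⊆ U := by
    intro z hz
    by_contra hzU
    have h1 := hgout z hzU
    have h2 : (0:ℝ) ≤ g z := hz
    linarith
  have hScomp : IsCompact S := isCompact_of_isClosed_isBounded hSclosed (hUb.subset hSU)
  obtain ⟨h₀, h₀pos, hthk⟩ := hScomp.exists_thickening_subset_open hUo hSU
  set K₁ : Set (Euc N) := cthickening (h₀/2) S with hK₁_def
  have hK₁comp : IsCompact K₁ := hScomp.cthickening
  have hK₁meas : MeasurableSet K₁ := hK₁comp.measurableSet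
  have hK₁U : K₁ ⊆ U :=
    (cthickening_subset_thickening' h₀pos (by linarith) S).trans hthk
  have hSK₁ : S ⊆ K₁ := self_subset_cthickening S
  -- the C¹ profile function v = (g⁺)²
  set v : Euc N → ℝ := fun z => max (g z) 0 ^ 2 with hv_def
  have hgC1 : ContDiffOn ℝ 1 g U := (hphu.1.sub (hphw.1.mono hUV)).sub contDiffOn_const
  have hvC1 : ContDiff ℝ 1 v := by
    rw [← contDiffOn_univ]
    apply contDiffOn_of_locally_contDiffOn
    intro z _
    by_cases hz : z ∈ U
    · exact ⟨U, hUo, hz, (sq_posPart_contDiff.comp_contDiffOn hgC1).mono inter_subset_right⟩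
    · refine ⟨{y | g y < 0}, isOpen_lt hgc continuous_const,
        lt_of_le_of_lt (hgout z hz) (by linarith), ?_⟩
      apply (contDiffOn_const (c := (0:ℝ))).congr
      intro y hy
      have hyneg : g y < 0 := hy.2
      simp [hv_def, max_eq_right hyneg.le]
  have hv0 : ∀ z, g z < 0 → v z = 0 := fun z hz => by
    simp [hv_def, max_eq_right hz.le]
  have hvsupp : HasCompactSupport v := by
    apply HasCompactSupport.intro hScomp
    intro z hz
    exact hv0 z (not_le.mp hz)
  have hDv : ∀ z ∈ U, HasFDerivAt v ((2 * max (g z) 0) • (fderiv ℝ u z - fderiv ℝ w z)) z :=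
    fun z hz => (sq_posPart_hasDerivAt (g z)).comp_hasFDerivAt z (hgF z hz)
  -- bound on the derivative of v
  have hDvcont : Continuous (fderiv ℝ v) := hvC1.continuous_fderiv one_ne_zero
  have hDvsupp : HasCompactSupport (fderiv ℝ v) := hvsupp.fderiv ℝ
  obtain ⟨C, hC⟩ := hDvsupp.exists_bound_of_continuous hDvcont
  have hC0 : 0 ≤ C := le_trans (norm_nonneg _) (hC x₀)
  -- bump functions
  set r : ℕ → ℝ := fun n => (h₀/2) / (n+1) with hr_def
  have hrpos : ∀ n, 0 < r n := fun n => by positivity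
  have hrle : ∀ n, r n ≤ h₀/2 := fun n =>
    div_le_self (by linarith) (by exact_mod_cast Nat.le_add_left 1 n)
  have hrlim : Tendsto r atTop (𝓝 0) := by
    have h1 := tendsto_one_div_add_atTop_nhds_zero_nat (𝕜 := ℝ)
    have h2 := h1.const_mul (h₀/2)
    rw [mul_zero] at h2
    refine h2.congr fun n => ?_
    rw [hr_def]
    field_simp
  set ρ : ℕ → ContDiffBump (0 : Euc N) :=
    fun n => ⟨r n / 2, r n, by positivity, half_lt_self (hrpos n)⟩ with hρ_def
  set φ : ℕ → Euc N → ℝ :=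
    fun n => (ρ n).normed volume ⋆[ContinuousLinearMap.lsmul ℝ ℝ, volume] v with hφ_def
  have hφsm : ∀ n, ContDiff ℝ (⊤ : ℕ∞) (φ n) := fun n =>
    (ρ n).hasCompactSupport_normed.contDiff_convolution_left _ (ρ n).contDiff_normed
      hvC1.continuous.locallyIntegrable
  have hφsupp : ∀ n, HasCompactSupport (φ n) := fun n =>
    (ρ n).hasCompactSupport_normed.convolution _ hvsupp
  have hφts : ∀ n, tsupport (φ n) ⊆ K₁ := by
    intro n
    have h1 : Function.support (φ n) ⊆ ball (0 : Euc N) (r n) + S := by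
      refine (support_convolution_subset _).trans ?_
      apply add_subset_add
      · rw [(ρ n).support_normed_eq]
      · exact (Function.support_subset_iff'.2 fun z hz => hv0 z (not_le.mp hz))
    have h2 : ball (0 : Euc N) (r n) + S ⊆ thickening (h₀/2) S := by
      rintro x ⟨a, ha, s, hs, rfl⟩
      rw [mem_thickening_iff]
      refine ⟨s, hs, ?_⟩
      rw [dist_eq_norm]
      simpa using lt_of_lt_of_le (mem_ball_zero_iff.mp ha) (hrle n)
    exact closure_minimal ((h1.trans h2).trans (thickening_subset_cthickening _ _))
      isClosed_cthickening
  have hφtsU : ∀ n, tsupport (φ n) ⊆ U := fun n => (hφts n).trans hK₁U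
  -- fderiv of φ n vanishes off K₁
  have hgradφ0 : ∀ n, ∀ z ∉ K₁, fderiv ℝ (φ n) z = 0 := by
    intro n z hz
    have hznt : z ∉ tsupport (φ n) := fun h => hz (hφts n h)
    by_contra hne0
    exact hznt (support_fderiv_subset ℝ hne0)
  -- the basic gradient-fderiv dictionary
  have hgrad_eq : ∀ (f : Euc N → ℝ) (z : Euc N) (X : Euc N),
      ⟪gradient f z, X⟫ = fderiv ℝ f z X := fun f z X =>
    InnerProductSpace.toDual_symm_apply
  -- continuity of gradient fields
  have hgradu_cont : ContinuousOn (fun z => gradient u z) U := by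
    have h1 : ContinuousOn (fderiv ℝ u) U := hphu.1.continuousOn_fderiv_of_isOpen hUo le_rfl
    exact ((InnerProductSpace.toDual ℝ (Euc N)).symm.continuous.comp_continuousOn h1)
  have hgradw_cont : ContinuousOn (fun z => gradient w z) U := by
    have h1 : ContinuousOn (fderiv ℝ w) V := hphw.1.continuousOn_fderiv_of_isOpen hVo le_rfl
    exact ((InnerProductSpace.toDual ℝ (Euc N)).symm.continuous.comp_continuousOn (h1.mono hUV))
  set Wv : Euc N → Euc N := fun z => Amap p (gradient u z) - Amap p (gradient w z) with hW_def
  have hWcont : ContinuousOn Wv U :=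
    ((continuous_Amap hp).comp_continuousOn hgradu_cont).sub
      ((continuous_Amap hp).comp_continuousOn hgradw_cont)
  -- integrability helper
  have integr : ∀ F : Euc N → ℝ, ContinuousOn F U → (∀ z ∈ U \ K₁, F z = 0) →
      IntegrableOn F U volume := by
    intro F hFc hF0
    have h1 : IntegrableOn F K₁ volume := (hFc.mono hK₁U).integrableOn_compact hK₁comp
    have h2 : IntegrableOn F (U \ K₁) volume := by
      have hz0 : IntegrableOn (fun _ : Euc N => (0:ℝ)) (U \ K₁) volume := integrableOn_zero
      exact hz0.congr_fun (fun z hz' => (hF0 z hz').symm) (hUo.measurableSet.diff hK₁meas)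
    exact (h2.union h1).mono_set fun z hz => by
      by_cases h : z ∈ K₁
      · exact Or.inr h
      · exact Or.inl ⟨hz, h⟩
  -- the approximating integrands
  set Gn : ℕ → Euc N → ℝ := fun n z => fderiv ℝ (φ n) z (Wv z) with hGn_def
  set Fe : Euc N → ℝ := fun z => fderiv ℝ v z (Wv z) with hFe_def
  have hgradφcont : ∀ n, Continuous (fderiv ℝ (φ n)) := fun n =>
    ((hφsm n).continuous_fderiv (by simp))
  have hGn_cont : ∀ n, ContinuousOn (Gn n) U := fun n =>
    ((hgradφcont n).continuousOn).clm_apply hWcont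
  have hGn_off : ∀ n, ∀ z ∈ U \ K₁, Gn n z = 0 := by
    intro n z hz
    simp only [hGn_def]
    rw [hgradφ0 n z hz.2]
    simp
  have hGint : ∀ n, IntegrableOn (Gn n) U volume := fun n =>
    integr (Gn n) (hGn_cont n) (hGn_off n)
  -- individual integrands are integrable
  have hAu_int : ∀ n, IntegrableOn
      (fun z => ⟪Amap p (gradient u z), gradient (φ n) z⟫) U volume := by
    intro n
    apply integr
    · apply ContinuousOn.inner
      · exact (continuous_Amap hp).comp_continuousOn hgradu_cont
      · exact ((InnerProductSpace.toDual ℝ (Euc N)).symm.continuous.comp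
          (hgradφcont n)).continuousOn
    · intro z hz
      have h1 : fderiv ℝ (φ n) z = 0 := hgradφ0 n z hz.2
      have h2 : gradient (φ n) z = 0 := by
        show (InnerProductSpace.toDual ℝ (Euc N)).symm (fderiv ℝ (φ n) z) = 0
        rw [h1]; simp
      rw [h2]
      simp
  have hAw_int : ∀ n, IntegrableOn
      (fun z => ⟪Amap p (gradient w z), gradient (φ n) z⟫) U volume := by
    intro n
    apply integr
    · apply ContinuousOn.inner
      · exact (continuous_Amap hp).comp_continuousOn hgradw_cont
      · exact ((InnerProductSpace.toDual ℝ (Euc N)).symm.continuous.comp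
          (hgradφcont n)).continuousOn
    · intro z hz
      have h1 : fderiv ℝ (φ n) z = 0 := hgradφ0 n z hz.2
      have h2 : gradient (φ n) z = 0 := by
        show (InnerProductSpace.toDual ℝ (Euc N)).symm (fderiv ℝ (φ n) z) = 0
        rw [h1]; simp
      rw [h2]
      simp
  -- each approximate integral vanishes
  have hmain : ∀ n, ∫ z in U, Gn n z = 0 := by
    intro n
    have e_u := hphu.2 (φ n) (hφsm n) (hφsupp n) (hφtsU n)
    have e_w := hphw.2 (φ n) (hφsm n) (hφsupp n) ((hφtsU n).trans hUV)
    have hvanish : ∀ z ∈ V \ U, ‖gradient w z‖ ^ (p-2) * ⟪gradient w z, gradient (φ n) z⟫ = 0 := by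
      intro z hz
      have h1 : fderiv ℝ (φ n) z = 0 := hgradφ0 n z fun hk => hz.2 (hK₁U hk)
      have h2 : gradient (φ n) z = 0 := by
        show (InnerProductSpace.toDual ℝ (Euc N)).symm (fderiv ℝ (φ n) z) = 0
        rw [h1]; simp
      rw [h2]
      simp
    rw [setIntegral_eq_of_subset_of_forall_diff_eq_zero hVo.measurableSet hUV hvanish] at e_w
    simp_rw [show ∀ z : Euc N, ‖gradient u z‖ ^ (p-2) * ⟪gradient u z, gradient (φ n) z⟫
        = ⟪Amap p (gradient u z), gradient (φ n) z⟫ from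
      fun z => (real_inner_smul_left _ _ _).symm] at e_u
    simp_rw [show ∀ z : Euc N, ‖gradient w z‖ ^ (p-2) * ⟪gradient w z, gradient (φ n) z⟫
        = ⟪Amap p (gradient w z), gradient (φ n) z⟫ from
      fun z => (real_inner_smul_left _ _ _).symm] at e_w
    have hsub : ∫ z in U, (⟪Amap p (gradient u z), gradient (φ n) z⟫
        - ⟪Amap p (gradient w z), gradient (φ n) z⟫) = 0 := by
      rw [integral_sub (hAu_int n) (hAw_int n), e_u, e_w, sub_zero]
    rw [← hsub]
    apply setIntegral_congr_fun hUo.measurableSet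
    intro z _
    simp only [hGn_def]
    rw [← hgrad_eq (φ n) z (Wv z)]
    simp only [hW_def]
    rw [inner_sub_right, real_inner_comm (gradient (φ n) z) (Amap p (gradient u z)),
      real_inner_comm (gradient (φ n) z) (Amap p (gradient w z))]
  -- convolution representation, bound and convergence of the derivatives
  have hfd : ∀ n (z : Euc N), fderiv ℝ (φ n) z
      = (((ρ n).normed volume) ⋆[(ContinuousLinearMap.lsmul ℝ ℝ
        : ℝ →L[ℝ] (Euc N →L[ℝ] ℝ) →L[ℝ] (Euc N →L[ℝ] ℝ)), volume] fderiv ℝ v) z := by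
    intro n z
    simp only [hφ_def]
    exact fderiv_bump_convolution (ρ n) hvC1 hvsupp z
  have hop : ∀ n (z : Euc N), ‖fderiv ℝ (φ n) z‖ ≤ 3 * C := by
    intro n z
    simp only [hφ_def]
    exact bump_convolution_fderiv_bound (ρ n) hvC1 hvsupp hC z
  have hconv : ∀ z : Euc N, Tendsto (fun n => fderiv ℝ (φ n) z) atTop (𝓝 (fderiv ℝ v z)) := by
    intro z
    have h1 := bump_convolution_fderiv_tendsto ρ hrlim hvC1 hvsupp z
    exact h1.congr fun n => by simp only [hφ_def]
  have hGnconv : ∀ z : Euc N, Tendsto (fun n => Gn n z) atTop (𝓝 (Fe z)) := fun z =>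
    ((ContinuousLinearMap.apply ℝ ℝ (Wv z)).continuous.tendsto _).comp (hconv z)
  -- dominated convergence
  set bound : Euc N → ℝ := K₁.indicator fun z => ‖Wv z‖ * (3 * C) with hbound_def
  have hbound_int : Integrable bound (volume.restrict U) := by
    have h1 : IntegrableOn (fun z => ‖Wv z‖ * (3 * C)) K₁ volume :=
      (((hWcont.mono hK₁U).norm).mul continuousOn_const).integrableOn_compact hK₁comp
    exact (h1.integrable_indicator hK₁meas).restrict
  have hbnd : ∀ n, ∀ᵐ z ∂(volume.restrict U), ‖Gn n z‖ ≤ bound z := by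
    intro n
    apply Eventually.of_forall
    intro z
    by_cases h : z ∈ K₁
    · have h1 : bound z = ‖Wv z‖ * (3 * C) := by
        simp only [hbound_def]
        rw [indicator_of_mem h]
      rw [h1]
      calc ‖Gn n z‖ ≤ ‖fderiv ℝ (φ n) z‖ * ‖Wv z‖ := by
            simp only [hGn_def]
            exact (fderiv ℝ (φ n) z).le_opNorm (Wv z)
        _ ≤ (3 * C) * ‖Wv z‖ :=
            mul_le_mul_of_nonneg_right (hop n z) (norm_nonneg _)
        _ = ‖Wv z‖ * (3 * C) := by ring
    · have h1 : bound z = 0 := by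
        simp only [hbound_def]
        rw [indicator_of_notMem h]
      have h2 : Gn n z = 0 := by
        simp only [hGn_def]
        rw [hgradφ0 n z h]
        simp
      rw [h1, h2]
      simp
  have hFeint0 : ∫ z in U, Fe z = 0 := by
    have hdct := MeasureTheory.tendsto_integral_of_dominated_convergence
      (F := Gn) (f := Fe) (μ := volume.restrict U) bound
      (fun n => ((hGn_cont n).aestronglyMeasurable hUo.measurableSet))
      hbound_int hbnd (Eventually.of_forall hGnconv)
    have h2 : Tendsto (fun _ : ℕ => (0:ℝ)) atTop (𝓝 (∫ z in U, Fe z)) :=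
      hdct.congr fun n => hmain n
    exact tendsto_nhds_unique h2 tendsto_const_nhds
  -- structure of Fe on U
  have hFe_formula : ∀ z ∈ U, Fe z = (2 * max (g z) 0) *
      ⟪Amap p (gradient u z) - Amap p (gradient w z), gradient u z - gradient w z⟫ := by
    intro z hz
    have h1 : fderiv ℝ v z = (2 * max (g z) 0) • (fderiv ℝ u z - fderiv ℝ w z) :=
      (hDv z hz).fderiv
    have h2 : Fe z = (2 * max (g z) 0) * ((fderiv ℝ u z - fderiv ℝ w z) (Wv z)) := by
      simp only [hFe_def]
      rw [h1]
      simp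
    have h3 : (fderiv ℝ u z - fderiv ℝ w z) (Wv z)
        = ⟪Amap p (gradient u z) - Amap p (gradient w z), gradient u z - gradient w z⟫ := by
      rw [ContinuousLinearMap.sub_apply, ← hgrad_eq u z (Wv z), ← hgrad_eq w z (Wv z),
        ← inner_sub_left]
      exact real_inner_comm _ _
    rw [h2, h3]
  have hFe_nonneg : ∀ z ∈ U, 0 ≤ Fe z := by
    intro z hz
    rw [hFe_formula z hz]
    apply mul_nonneg
    · positivity
    · exact inner_Amap_nonneg hp _ _
  -- Fe vanishes off K₁ and is integrable
  have hFe0off : ∀ z ∈ U \ K₁, Fe z = 0 := by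
    intro z hz
    have hzS : z ∉ S := fun h => hz.2 (hSK₁ h)
    have hneg : g z < 0 := not_le.mp hzS
    have hev : v =ᶠ[𝓝 z] fun _ => 0 := by
      filter_upwards [(isOpen_lt hgc continuous_const).mem_nhds hneg] with y hy
      exact hv0 y hy
    have hfd0 : fderiv ℝ v z = 0 := by
      rw [Filter.EventuallyEq.fderiv_eq hev]
      exact fderiv_const_apply 0
    simp [hFe_def, hfd0]
  have hFecont : ContinuousOn Fe U := (hDvcont.continuousOn).clm_apply hWcont
  have hFeint : IntegrableOn Fe U volume := integr Fe hFecont hFe0off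
  -- Fe = 0 a.e. on U, hence everywhere on U
  have hnn : 0 ≤ᵐ[volume.restrict U] Fe :=
    (ae_restrict_iff' hUo.measurableSet).mpr (Eventually.of_forall hFe_nonneg)
  have hae : Fe =ᵐ[volume.restrict U] 0 :=
    (integral_eq_zero_iff_of_nonneg_ae hnn hFeint).mp hFeint0
  have hFeZero : ∀ z ∈ U, Fe z = 0 := by
    intro z hz
    by_contra hnz
    have hT : IsOpen (U ∩ Fe ⁻¹' {0}ᶜ) :=
      hFecont.isOpen_inter_preimage hUo isOpen_compl_singleton
    have hTz : z ∈ U ∩ Fe ⁻¹' {0}ᶜ := ⟨hz, hnz⟩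
    have hpos : 0 < volume (U ∩ Fe ⁻¹' {0}ᶜ) := hT.measure_pos volume ⟨z, hTz⟩
    have h0meas : volume.restrict U {y | ¬ Fe y = 0} = 0 := by
      have := hae
      rw [Filter.EventuallyEq, Filter.eventually_iff, mem_ae_iff] at this
      simpa [Set.compl_setOf] using this
    have hnull : volume.restrict U (U ∩ Fe ⁻¹' {0}ᶜ) = 0 :=
      measure_mono_null (fun y hy => hy.2) h0meas
    rw [Measure.restrict_apply' hUo.measurableSet,
      inter_eq_self_of_subset_left inter_subset_left] at hnull
    exact absurd hnull hpos.ne'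
  -- the derivative of g vanishes where g > 0
  have hderiv0 : ∀ z, 0 < g z → HasFDerivAt g (0 : Euc N →L[ℝ] ℝ) z := by
    intro z hzpos
    have hzU : z ∈ U := hSU hzpos.le
    have hFe := hFeZero z hzU
    rw [hFe_formula z hzU] at hFe
    have hfac : (0:ℝ) < 2 * max (g z) 0 := by
      rw [max_eq_left hzpos.le]
      linarith
    have hinner : ⟪Amap p (gradient u z) - Amap p (gradient w z),
        gradient u z - gradient w z⟫ = 0 := by
      rcases mul_eq_zero.mp hFe with h | h
      · exact absurd h hfac.ne'
      · exact h
    have hgr : gradient u z = gradient w z := eq_of_inner_Amap_eq_zero hp hinner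
    have hfd_eq : fderiv ℝ u z = fderiv ℝ w z := by
      have h1 : (InnerProductSpace.toDual ℝ (Euc N)).symm (fderiv ℝ u z)
          = (InnerProductSpace.toDual ℝ (Euc N)).symm (fderiv ℝ w z) := hgr
      exact (InnerProductSpace.toDual ℝ (Euc N)).symm.injective h1
    have h2 := hgF z hzU
    rw [hfd_eq, sub_self] at h2
    exact h2
  -- maximum of g is attained; the level set of the max is clopen
  set S' : Set (Euc N) := {z | g x₀ ≤ g z} with hS'_def
  have hS'c : IsClosed S' := isClosed_le continuous_const hgc
  have hS'S : S' ⊆ S := fun z hz => le_trans hgx.le hz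
  have hS'comp : IsCompact S' :=
    isCompact_of_isClosed_isBounded hS'c (hUb.subset (hS'S.trans hSU))
  obtain ⟨m, hmS', hmax⟩ := hS'comp.exists_isMaxOn ⟨x₀, show g x₀ ≤ g x₀ from le_refl _⟩ hgc.continuousOn
  have hMx : g x₀ ≤ g m := hmS'
  have hMpos : 0 < g m := lt_of_lt_of_le hgx hMx
  have hM : ∀ z, g z ≤ g m := by
    intro z
    by_cases h : g x₀ ≤ g z
    · exact hmax h
    · linarith [not_le.mp h]
  set T : Set (Euc N) := {z | g z = g m} with hT_def
  have hTclosed : IsClosed T := isClosed_eq hgc continuous_const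
  have hTopen : IsOpen T := by
    rw [Metric.isOpen_iff]
    intro z hz
    have hzT : g z = g m := hz
    have hzpos : 0 < g z := hzT ▸ hMpos
    obtain ⟨δ, hδpos, hball⟩ :=
      Metric.isOpen_iff.mp (isOpen_lt continuous_const hgc) z hzpos
    refine ⟨δ, hδpos, ?_⟩
    intro y hy
    have hconst : ∀ y' ∈ ball z δ, g y' = g z := by
      intro y' hy'
      have hconv : Convex ℝ (ball z δ) := convex_ball z δ
      have hdiff : DifferentiableOn ℝ g (ball z δ) := fun a ha =>
        ((hderiv0 a (hball ha)).differentiableAt).differentiableWithinAt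
      have hfz : ∀ a ∈ ball z δ, fderivWithin ℝ g (ball z δ) a = 0 := by
        intro a ha
        rw [fderivWithin_of_isOpen isOpen_ball ha]
        exact (hderiv0 a (hball ha)).fderiv
      exact hconv.is_const_of_fderivWithin_eq_zero hdiff hfz hy' (mem_ball_self hδpos)
    show g y = g m
    rw [hconst y hy, hzT]
  have hTuniv : T = univ := IsClopen.eq_univ ⟨hTclosed, hTopen⟩ ⟨m, rfl⟩
  obtain ⟨z₀, hz₀⟩ := hne
  have hz₀T : z₀ ∈ T := by rw [hTuniv]; trivial
  have hz₀M : g z₀ = g m := hz₀T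
  have := hgout z₀ hz₀
  linarith

lemma endgame {Ω : Set (Euc N)} (hΩo : IsOpen Ω) {w u : Euc N → ℝ} {l lam : ℝ}
    (hl : 0 < l) (hw : Continuous w)
    (hsuper : ∀ x ∈ frontier Ω, lam ≤ infDist x {y | w y = l})
    (h0 : ∀ x ∉ Ω, w x = 0) (hcomp : ∀ z, u z ≤ w z)
    {x y : Euc N} (hx : x ∈ frontier Ω) (hy : u y = l) : lam ≤ dist x y := by
  have hxΩ : x ∉ Ω := fun hmem => hx.2 (by rwa [hΩo.interior_eq])
  have hwx : w x = 0 := h0 x hxΩ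
  have hwy : l ≤ w y := hy ▸ hcomp y
  set γ : ℝ → Euc N := fun t => x + t • (y - x) with hγ
  have hγcont : Continuous γ := by
    apply continuous_const.add
    exact continuous_id.smul continuous_const
  have hγ0 : γ 0 = x := by simp [hγ]
  have hγ1 : γ 1 = y := by simp [hγ]
  have hγc : ContinuousOn (w ∘ γ) (Icc 0 1) := (hw.comp hγcont).continuousOn
  have hmem : l ∈ Icc ((w ∘ γ) 0) ((w ∘ γ) 1) := by
    constructor
    · show l ≥ w (γ 0)
      rw [hγ0, hwx]; exact hl.le
    · show l ≤ w (γ 1)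
      rw [hγ1]; exact hwy
  obtain ⟨t, ht01, htl⟩ := intermediate_value_Icc zero_le_one hγc hmem
  have hz : w (γ t) = l := htl
  have hdist : dist x (γ t) ≤ dist x y := by
    rw [dist_eq_norm, dist_eq_norm]
    have hxγ : x - γ t = -(t • (y - x)) := by simp [hγ]
    calc ‖x - γ t‖ = ‖t • (y - x)‖ := by rw [hxγ, norm_neg]
      _ = |t| * ‖y - x‖ := by rw [norm_smul, Real.norm_eq_abs]
      _ ≤ 1 * ‖y - x‖ := by
          apply mul_le_mul_of_nonneg_right _ (norm_nonneg _)
          rw [abs_of_nonneg ht01.1]; exact ht01.2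
      _ = ‖x - y‖ := by rw [one_mul, norm_sub_rev]
  have h1 := hsuper x hx
  have h2 : infDist x {y | w y = l} ≤ dist x (γ t) := infDist_le_dist_of_mem hz
  linarith

end SuperAux

/-- The class of supersolutions for `(P_E)` is closed under intersection. -/
theorem supersolution_intersection
    (N : ℕ) (hN : 2 ≤ N) (p : ℝ) (hp : 1 < p)
    (K : Set (Euc N)) (hKne : K.Nonempty) (hKconv : Convex ℝ K) (hKopen : IsOpen K)
    (hKbdd : IsBounded K) (l lam : ℝ) (hl : l ∈ Set.Ioo (0 : ℝ) 1) (hlam : 0 < lam)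
    (Ω₁ Ω₂ : Set (Euc N)) (u₁ u₂ : Euc N → ℝ)
    (h₁conv : Convex ℝ Ω₁) (h₁open : IsOpen Ω₁) (h₁bdd : IsBounded Ω₁)
    (h₁K : closure K ⊆ Ω₁) (h₁pot : IsCapPotential p K Ω₁ u₁)
    (h₁super : ∀ x ∈ frontier Ω₁, lam ≤ infDist x {y | u₁ y = l})
    (h₂conv : Convex ℝ Ω₂) (h₂open : IsOpen Ω₂) (h₂bdd : IsBounded Ω₂)
    (h₂K : closure K ⊆ Ω₂) (h₂pot : IsCapPotential p K Ω₂ u₂)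
    (h₂super : ∀ x ∈ frontier Ω₂, lam ≤ infDist x {y | u₂ y = l}) :
    ∀ u : Euc N → ℝ, IsCapPotential p K (Ω₁ ∩ Ω₂) u →
      ∀ x ∈ frontier (Ω₁ ∩ Ω₂), lam ≤ infDist x {y | u y = l} := by
  intro u hpot x hx
  obtain ⟨huc, hub, huK, hu0, huh⟩ := hpot
  obtain ⟨h1c, h1b, h1K', h10, h1h⟩ := h₁pot
  obtain ⟨h2c, h2b, h2K', h20, h2h⟩ := h₂pot
  have hΩo : IsOpen (Ω₁ ∩ Ω₂) := h₁open.inter h₂open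
  have hucont : Continuous u := SuperAux.cont_global hΩo huc hu0
  have h1cont : Continuous u₁ := SuperAux.cont_global h₁open h1c h10
  have h2cont : Continuous u₂ := SuperAux.cont_global h₂open h2c h20
  obtain ⟨k, hk⟩ := hKne
  have hkcl : k ∈ closure K := subset_closure hk
  have hne : ∃ z : Euc N, z ∉ (Ω₁ ∩ Ω₂) \ closure K := ⟨k, fun h => h.2 hkcl⟩
  -- comparison with u₁
  have comp1 : ∀ z, u z ≤ u₁ z := by
    refine SuperAux.comparison hp (hΩo.sdiff isClosed_closure)
      (h₁open.sdiff isClosed_closure)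
      (diff_subset_diff_left inter_subset_left)
      (h₁bdd.subset (diff_subset.trans inter_subset_left)) hne hucont h1cont huh h1h ?_
    intro z hz
    by_cases hzK : z ∈ closure K
    · rw [huK z hzK, h1K' z hzK]
    · have hzΩ : z ∉ Ω₁ ∩ Ω₂ := fun h => hz ⟨h, hzK⟩
      rw [hu0 z hzΩ]; exact (h1b z).1
  -- comparison with u₂
  have comp2 : ∀ z, u z ≤ u₂ z := by
    refine SuperAux.comparison hp (hΩo.sdiff isClosed_closure)
      (h₂open.sdiff isClosed_closure)
      (diff_subset_diff_left inter_subset_right)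
      (h₁bdd.subset (diff_subset.trans inter_subset_left)) hne hucont h2cont huh h2h ?_
    intro z hz
    by_cases hzK : z ∈ closure K
    · rw [huK z hzK, h2K' z hzK]
    · have hzΩ : z ∉ Ω₁ ∩ Ω₂ := fun h => hz ⟨h, hzK⟩
      rw [hu0 z hzΩ]; exact (h2b z).1
  -- the level set is nonempty
  have hlevel : {y | u y = l}.Nonempty := by
    have hnz : ∃ z : Euc N, z ∉ Ω₁ ∩ Ω₂ := by
      by_contra hcon
      push_neg at hcon
      have : Ω₁ ∩ Ω₂ = univ := eq_univ_of_forall hcon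
      have hb : IsBounded (univ : Set (Euc N)) := this ▸ h₁bdd.subset inter_subset_left
      haveI : Nonempty (Fin N) := ⟨⟨0, by omega⟩⟩
      haveI : Nontrivial (Euc N) := inferInstance
      exact (NormedSpace.unbounded_univ ℝ (Euc N)) hb
    obtain ⟨z, hz⟩ := hnz
    have h1 : u z = 0 := hu0 z hz
    have h2 : u k = 1 := huK k hkcl
    have : l ∈ Icc (u z) (u k) := by rw [h1, h2]; exact ⟨hl.1.le, hl.2.le⟩
    obtain ⟨y, hy⟩ := intermediate_value_univ z k hucont this
    exact ⟨y, hy⟩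
  rw [← not_lt, Metric.infDist_lt_iff hlevel]
  push_neg
  intro y hy
  rcases frontier_inter_subset Ω₁ Ω₂ hx with h | h
  · exact SuperAux.endgame h₁open hl.1 h1cont h₁super h10 comp1 h.1 hy
  · exact SuperAux.endgame h₂open hl.1 h2cont h₂super h20 comp2 h.2 hy
end
end

section
/- Let N ≥ 2 be an integer and p ∈ (1,∞) with p ≠ N; set γ := (p−N)/(p−1). Let R > 0, l ∈ (0,1), and define Λ : (0,R) → ℝ by Λ(r) := ((1−l)·r^γ + l·R^γ)^{1/γ} − r. Then: (i) Λ(r) + r ≤ R for all r ∈ (0,R); (ii) setting r_max := R·(l/((1−l)^{(N−p)/(N−1)} − (1−l)))^{(p−1)/(p−N)}, one has 0 < r_max < R, Λ is strictly increasing on (0, r_max] and strictly decreasing on [r_max, R); (iii) Λ(r) → 0 as r → R⁻; as r → 0⁺, Λ(r) → l^{(p−1)/(p−N)}·R if p > N and Λ(r) → 0 if p < N; and (iv) the maximum value is Λ(r_max) = R·[(l/(1 − (1−l)^{(p−1)/(N−1)}))^{(p−1)/(p−N)} − (l/((1−l)^{(N−p)/(N−1)} − (1−l)))^{(p−1)/(p−N)}].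 -/
open Set Filter Topology

noncomputable section

/-- Distance from the inner sphere of radius `r` to the `l`-level set of the
`p`-capacitary potential of the annulus `B_R \ B_r` (case `p ≠ N`), where
`γ = (p − N)/(p − 1)`. -/
def Lam9 (N : ℕ) (p R l r : ℝ) : ℝ :=
  ((1 - l) * r ^ ((p - N) / (p - 1)) + l * R ^ ((p - N) / (p - 1))) ^ ((p - 1) / (p - N)) - r

/-- The radius at which `Lam9` attains its maximum. -/
def rmax9 (N : ℕ) (p R l : ℝ) : ℝ :=
  R * (l / ((1 - l) ^ (((N : ℝ) - p) / ((N : ℝ) - 1)) - (1 - l))) ^ ((p - 1) / (p - N))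

set_option maxHeartbeats 1600000 in
theorem annulus_distance_function_p_ne_N
    (N : ℕ) (hN : 2 ≤ N) (p : ℝ) (hp : 1 < p) (hpN : p ≠ (N : ℝ))
    (R l : ℝ) (hR : 0 < R) (hl : l ∈ Set.Ioo (0 : ℝ) 1) :
    (∀ r ∈ Set.Ioo (0 : ℝ) R, Lam9 N p R l r + r ≤ R) ∧
    (0 < rmax9 N p R l ∧ rmax9 N p R l < R ∧
      StrictMonoOn (Lam9 N p R l) (Set.Ioc 0 (rmax9 N p R l)) ∧
      StrictAntiOn (Lam9 N p R l) (Set.Ico (rmax9 N p R l) R)) ∧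
    (Tendsto (Lam9 N p R l) (𝓝[<] R) (𝓝 0) ∧
      ((N : ℝ) < p →
        Tendsto (Lam9 N p R l) (𝓝[>] 0) (𝓝 (l ^ ((p - 1) / (p - N)) * R))) ∧
      (p < (N : ℝ) → Tendsto (Lam9 N p R l) (𝓝[>] 0) (𝓝 0))) ∧
    Lam9 N p R l (rmax9 N p R l) =
      R * ((l / (1 - (1 - l) ^ ((p - 1) / ((N : ℝ) - 1)))) ^ ((p - 1) / (p - N)) -
        (l / ((1 - l) ^ (((N : ℝ) - p) / ((N : ℝ) - 1)) - (1 - l))) ^ ((p - 1) / (p - N))) := by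
  obtain ⟨hl0, hl1⟩ := hl
  have hN2 : (2:ℝ) ≤ (N:ℝ) := by exact_mod_cast hN
  have hp1 : (0:ℝ) < p - 1 := by linarith
  have hN1 : (0:ℝ) < (N:ℝ) - 1 := by linarith
  have hpN0 : p - (N:ℝ) ≠ 0 := sub_ne_zero.2 hpN
  obtain ⟨γ, hγdef⟩ : ∃ x : ℝ, x = (p - (N:ℝ)) / (p - 1) := ⟨_, rfl⟩
  obtain ⟨δ, hδdef⟩ : ∃ x : ℝ, x = (p - 1) / (p - (N:ℝ)) := ⟨_, rfl⟩
  obtain ⟨A, hAdef⟩ : ∃ x : ℝ, x = 1 - l := ⟨_, rfl⟩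
  obtain ⟨θ, hθdef⟩ : ∃ x : ℝ, x = ((N:ℝ) - p) / ((N:ℝ) - 1) := ⟨_, rfl⟩
  obtain ⟨e, hedef⟩ : ∃ x : ℝ, x = (p - 1) / ((N:ℝ) - 1) := ⟨_, rfl⟩
  obtain ⟨c, hcdef⟩ : ∃ x : ℝ, x = (p - (N:ℝ)) / ((N:ℝ) - 1) := ⟨_, rfl⟩
  have hA0 : 0 < A := by rw [hAdef]; linarith
  have hA1 : A < 1 := by rw [hAdef]; linarith
  obtain ⟨D, hDdef⟩ : ∃ x : ℝ, x = A ^ θ - A := ⟨_, rfl⟩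
  have hδγ : δ * γ = 1 := by rw [hδdef, hγdef]; field_simp
  have hγδ : γ * δ = 1 := by rw [hδdef, hγdef]; field_simp
  have hθc : θ + c = 0 := by rw [hθdef, hcdef]; field_simp; ring
  have hθe : θ + e = 1 := by rw [hθdef, hedef]; field_simp; ring
  have hδ1c : (δ - 1) * c = 1 := by rw [hδdef, hcdef]; field_simp; ring
  have h1γc : (1 - γ) * c = γ := by rw [hγdef, hcdef]; field_simp; ring
  have hAθ : 0 < A ^ θ := Real.rpow_pos_of_pos hA0 _
  have hAc : 0 < A ^ c := Real.rpow_pos_of_pos hA0 _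
  have hRg : 0 < R ^ γ := Real.rpow_pos_of_pos hR _
  have hD : 0 < D := by
    rcases hpN.lt_or_gt with hcase | hcase
    · have hθ1 : θ < 1 := by
        rw [hθdef, div_lt_one hN1]; linarith
      have h := Real.rpow_lt_rpow_of_exponent_gt hA0 hA1 hθ1
      rw [Real.rpow_one] at h
      rw [hDdef]; linarith
    · have hθneg : θ < 0 := by
        rw [hθdef]; exact div_neg_of_neg_of_pos (by linarith) hN1
      have h := Real.rpow_lt_rpow_of_exponent_gt hA0 hA1 hθneg
      rw [Real.rpow_zero] at h
      rw [hDdef]; linarith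
  have hq : 0 < l / D := div_pos hl0 hD
  have hrmax : rmax9 N p R l = R * (l / D) ^ δ := by
    rw [rmax9, hDdef, hAdef, hθdef, hδdef]
  obtain ⟨rmax, hrmaxdef⟩ : ∃ x : ℝ, x = rmax9 N p R l := ⟨_, rfl⟩
  rw [← hrmaxdef]
  have hrmax' : rmax = R * (l / D) ^ δ := by rw [hrmaxdef, hrmax]
  have hrm0 : 0 < rmax := by
    rw [hrmax']; exact mul_pos hR (Real.rpow_pos_of_pos hq δ)
  have hrmR : rmax < R := by
    rw [hrmax']
    have h1 : (l / D) ^ δ < 1 := by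
      rcases hpN.lt_or_gt with hcase | hcase
      · have hδneg : δ < 0 := by
          rw [hδdef]; exact div_neg_of_pos_of_neg hp1 (by linarith)
        have hDl : D < l := by
          have hθpos : 0 < θ := by rw [hθdef]; exact div_pos (by linarith) hN1
          have h := Real.rpow_lt_one hA0.le hA1 hθpos
          rw [hDdef]; rw [hAdef] at h ⊢; linarith
        exact Real.rpow_lt_one_of_one_lt_of_neg ((one_lt_div hD).2 hDl) hδneg
      · have hδpos : 0 < δ := by rw [hδdef]; exact div_pos hp1 (by linarith)
        have hlD : l < D := by
          have hθneg : θ < 0 := by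
            rw [hθdef]; exact div_neg_of_neg_of_pos (by linarith) hN1
          have h := Real.rpow_lt_rpow_of_exponent_gt hA0 hA1 hθneg
          rw [Real.rpow_zero] at h
          rw [hDdef]; rw [hAdef] at h ⊢; linarith
        exact Real.rpow_lt_one hq.le ((div_lt_one hD).2 hlD) hδpos
    nlinarith
  obtain ⟨F, hFr⟩ : ∃ F : ℝ → ℝ, ∀ r, F r = A * r ^ γ + l * R ^ γ := ⟨_, fun _ => rfl⟩
  have hF : ∀ r : ℝ, 0 < r → 0 < F r := fun r hr => by
    have h1 := Real.rpow_pos_of_pos hr γ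
    rw [hFr]; positivity
  have hLam : ∀ r : ℝ, Lam9 N p R l r = (F r) ^ δ - r := by
    intro r
    rw [Lam9, hFr, hAdef, hγdef, hδdef]
  have hRγδ : (R ^ γ) ^ δ = R := by
    rw [← Real.rpow_mul hR.le, hγδ, Real.rpow_one]
  have hderiv : ∀ r : ℝ, 0 < r →
      HasDerivAt (Lam9 N p R l) (A * r ^ (γ - 1) * (F r) ^ (δ - 1) - 1) r := by
    intro r hr
    have h1 : HasDerivAt (fun x : ℝ => x ^ γ) (γ * r ^ (γ - 1)) r :=
      Real.hasDerivAt_rpow_const (Or.inl hr.ne')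
    have h2 : HasDerivAt (fun x : ℝ => A * x ^ γ + l * R ^ γ)
        (A * (γ * r ^ (γ - 1))) r := (h1.const_mul A).add_const _
    have h2' : HasDerivAt F (A * (γ * r ^ (γ - 1))) r := by
      have : F = fun x : ℝ => A * x ^ γ + l * R ^ γ := funext hFr
      rw [this]; exact h2
    have h3 : HasDerivAt (fun y : ℝ => y ^ δ) (δ * (F r) ^ (δ - 1)) (F r) :=
      Real.hasDerivAt_rpow_const (Or.inl (hF r hr).ne')
    have h4 := (h3.comp r h2').sub (hasDerivAt_id r)
    have heq : δ * F r ^ (δ - 1) * (A * (γ * r ^ (γ - 1))) - 1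
        = A * r ^ (γ - 1) * (F r) ^ (δ - 1) - 1 := by
      linear_combination (A * r ^ (γ - 1) * (F r) ^ (δ - 1)) * hδγ
    rw [heq] at h4
    have hfun : Lam9 N p R l = fun x => (fun y : ℝ => y ^ δ) (F x) - id x := by
      funext x; rw [hLam x]; rfl
    rw [hfun]
    exact h4
  have hrmγ : rmax ^ γ = R ^ γ * (l / D) := by
    rw [hrmax', Real.mul_rpow hR.le (Real.rpow_nonneg hq.le δ),
      ← Real.rpow_mul hq.le, hδγ, Real.rpow_one]
  -- the sign of the derivative
  have hsign : ∀ r : ℝ, 0 < r →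
      (1 < A * r ^ (γ - 1) * (F r) ^ (δ - 1) ↔ r < rmax) ∧
      (A * r ^ (γ - 1) * (F r) ^ (δ - 1) < 1 ↔ rmax < r) := by
    intro r hr
    have hu : (0:ℝ) < r ^ (γ - 1) := Real.rpow_pos_of_pos hr _
    have hY : (0:ℝ) < (F r) ^ (δ - 1) := Real.rpow_pos_of_pos (hF r hr) _
    have hx1 : r ^ (γ - 1) * r ^ (1 - γ) = 1 := by
      rw [← Real.rpow_add hr]; norm_num
    have hrg : 0 < r ^ γ := Real.rpow_pos_of_pos hr _
    have hr1g : 0 < r ^ (1 - γ) := Real.rpow_pos_of_pos hr _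
    have hAθc : A ^ θ * A ^ c = 1 := by
      rw [← Real.rpow_add hA0, hθc, Real.rpow_zero]
    have h2 : r ^ (1 - γ) * (A * r ^ (γ - 1) * F r ^ (δ - 1)) = A * F r ^ (δ - 1) := by
      linear_combination (A * F r ^ (δ - 1)) * hx1
    have step1 : (1 < A * r ^ (γ - 1) * (F r) ^ (δ - 1) ↔
        r ^ (1 - γ) < A * (F r) ^ (δ - 1)) ∧
        (A * r ^ (γ - 1) * (F r) ^ (δ - 1) < 1 ↔
        A * (F r) ^ (δ - 1) < r ^ (1 - γ)) := by
      constructor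
      · constructor
        · intro h
          have h' := mul_lt_mul_of_pos_left h hr1g
          rw [mul_one, h2] at h'
          exact h'
        · intro h
          have h' := mul_lt_mul_of_pos_left h hu
          rw [hx1] at h'
          linarith
      · constructor
        · intro h
          have h' := mul_lt_mul_of_pos_left h hr1g
          rw [mul_one, h2] at h'
          exact h'
        · intro h
          have h' := mul_lt_mul_of_pos_left h hu
          rw [hx1] at h'
          linarith
    have hAY : (A * (F r) ^ (δ - 1)) ^ c = A ^ c * F r := by
      rw [Real.mul_rpow hA0.le hY.le, ← Real.rpow_mul (hF r hr).le, hδ1c, Real.rpow_one]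
    have hr1γc : (r ^ (1 - γ)) ^ c = r ^ γ := by
      rw [← Real.rpow_mul hr.le, h1γc]
    have hAθcF : A ^ θ * (A ^ c * F r) = F r := by
      rw [← mul_assoc, hAθc, one_mul]
    have hdiv : R ^ γ * (l / D) = l * R ^ γ / D := by ring
    have hcθ : A ^ c * (A ^ θ * r ^ γ) = r ^ γ := by
      rw [← mul_assoc, mul_comm (A ^ c), hAθc, one_mul]
    have iff2 : (A ^ c * F r < r ^ γ ↔ l * R ^ γ < D * r ^ γ) ∧
        (r ^ γ < A ^ c * F r ↔ D * r ^ γ < l * R ^ γ) := by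
      rw [hDdef]
      constructor
      · constructor
        · intro h
          have h' := mul_lt_mul_of_pos_left h hAθ
          rw [hAθcF, hFr r] at h'
          linarith [h']
        · intro h
          have h'' : F r < A ^ θ * r ^ γ := by rw [hFr]; linarith
          have h3 := mul_lt_mul_of_pos_left h'' hAc
          rw [hcθ] at h3
          exact h3
      · constructor
        · intro h
          have h' := mul_lt_mul_of_pos_left h hAθ
          rw [hAθcF, hFr r] at h'
          linarith [h']
        · intro h
          have h'' : A ^ θ * r ^ γ < F r := by rw [hFr]; linarith
          have h3 := mul_lt_mul_of_pos_left h'' hAc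
          rw [hcθ] at h3
          exact h3
    rcases hpN.lt_or_gt with hcase | hcase
    · -- p < N : γ, δ, c < 0
      have hγneg : γ < 0 := by rw [hγdef]; exact div_neg_of_neg_of_pos (by linarith) hp1
      have hcneg : c < 0 := by rw [hcdef]; exact div_neg_of_neg_of_pos (by linarith) hN1
      have iff1 : r ^ (1 - γ) < A * (F r) ^ (δ - 1) ↔ A ^ c * F r < r ^ γ := by
        rw [← hr1γc, ← hAY]
        exact (Real.rpow_lt_rpow_iff_of_neg (by positivity) hr1g hcneg).symm
      have iff1' : A * (F r) ^ (δ - 1) < r ^ (1 - γ) ↔ r ^ γ < A ^ c * F r := by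
        rw [← hr1γc, ← hAY]
        exact (Real.rpow_lt_rpow_iff_of_neg hr1g (by positivity) hcneg).symm
      have iff3 : l * R ^ γ < D * r ^ γ ↔ rmax ^ γ < r ^ γ := by
        rw [hrmγ, hdiv, div_lt_iff₀ hD, mul_comm D (r ^ γ)]
      have iff3' : D * r ^ γ < l * R ^ γ ↔ r ^ γ < rmax ^ γ := by
        rw [hrmγ, hdiv, lt_div_iff₀ hD, mul_comm (r ^ γ) D]
      have iff4 : rmax ^ γ < r ^ γ ↔ r < rmax :=
        Real.rpow_lt_rpow_iff_of_neg hrm0 hr hγneg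
      have iff4' : r ^ γ < rmax ^ γ ↔ rmax < r :=
        Real.rpow_lt_rpow_iff_of_neg hr hrm0 hγneg
      exact ⟨step1.1.trans (iff1.trans (iff2.1.trans (iff3.trans iff4))),
        step1.2.trans (iff1'.trans (iff2.2.trans (iff3'.trans iff4')))⟩
    · -- N < p : γ, δ, c > 0
      have hγpos : 0 < γ := by rw [hγdef]; exact div_pos (by linarith) hp1
      have hcpos : 0 < c := by rw [hcdef]; exact div_pos (by linarith) hN1
      have iff1 : r ^ (1 - γ) < A * (F r) ^ (δ - 1) ↔ r ^ γ < A ^ c * F r := by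
        rw [← hr1γc, ← hAY]
        exact (Real.rpow_lt_rpow_iff hr1g.le (by positivity) hcpos).symm
      have iff1' : A * (F r) ^ (δ - 1) < r ^ (1 - γ) ↔ A ^ c * F r < r ^ γ := by
        rw [← hr1γc, ← hAY]
        exact (Real.rpow_lt_rpow_iff (by positivity) hr1g.le hcpos).symm
      have iff3 : D * r ^ γ < l * R ^ γ ↔ r ^ γ < rmax ^ γ := by
        rw [hrmγ, hdiv, lt_div_iff₀ hD, mul_comm (r ^ γ) D]
      have iff3' : l * R ^ γ < D * r ^ γ ↔ rmax ^ γ < r ^ γ := by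
        rw [hrmγ, hdiv, div_lt_iff₀ hD, mul_comm D (r ^ γ)]
      have iff4 : r ^ γ < rmax ^ γ ↔ r < rmax :=
        Real.rpow_lt_rpow_iff hr.le hrm0.le hγpos
      have iff4' : rmax ^ γ < r ^ γ ↔ rmax < r :=
        Real.rpow_lt_rpow_iff hrm0.le hr.le hγpos
      exact ⟨step1.1.trans (iff1.trans (iff2.2.trans (iff3.trans iff4))),
        step1.2.trans (iff1'.trans (iff2.1.trans (iff3'.trans iff4')))⟩
  refine ⟨?_, ⟨?_, ?_, ?_, ?_⟩, ⟨?_, ?_, ?_⟩, ?_⟩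
  · -- part (i)
    intro r hr
    rw [hLam, sub_add_cancel]
    have hsum : A * R ^ γ + l * R ^ γ = R ^ γ := by rw [hAdef]; ring
    rcases hpN.lt_or_gt with hcase | hcase
    · have hγneg : γ < 0 := by rw [hγdef]; exact div_neg_of_neg_of_pos (by linarith) hp1
      have hδneg : δ < 0 := by rw [hδdef]; exact div_neg_of_pos_of_neg hp1 (by linarith)
      have h1 : R ^ γ < r ^ γ := (Real.rpow_lt_rpow_iff_of_neg hR hr.1 hγneg).2 hr.2
      have h2 : R ^ γ < F r := by
        rw [hFr]; linarith [mul_lt_mul_of_pos_left h1 hA0, hsum]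
      have h3 : (F r) ^ δ < (R ^ γ) ^ δ :=
        (Real.rpow_lt_rpow_iff_of_neg (hF r hr.1) hRg hδneg).2 h2
      rw [hRγδ] at h3; linarith
    · have hγpos : 0 < γ := by rw [hγdef]; exact div_pos (by linarith) hp1
      have hδpos : 0 < δ := by rw [hδdef]; exact div_pos hp1 (by linarith)
      have h1 : r ^ γ < R ^ γ := Real.rpow_lt_rpow hr.1.le hr.2 hγpos
      have h2 : F r < R ^ γ := by
        rw [hFr]; linarith [mul_lt_mul_of_pos_left h1 hA0, hsum]
      have h3 : (F r) ^ δ < (R ^ γ) ^ δ := Real.rpow_lt_rpow (hF r hr.1).le h2 hδpos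
      rw [hRγδ] at h3; linarith
  · exact hrm0
  · exact hrmR
  · -- strict mono
    apply strictMonoOn_of_deriv_pos (convex_Ioc _ _)
    · intro x hx
      exact (hderiv x hx.1).continuousAt.continuousWithinAt
    · intro x hx
      rw [interior_Ioc] at hx
      rw [(hderiv x hx.1).deriv]
      have h := ((hsign x hx.1).1).2 hx.2
      linarith
  · -- strict anti
    apply strictAntiOn_of_deriv_neg (convex_Ico _ _)
    · intro x hx
      exact (hderiv x (hrm0.trans_le hx.1)).continuousAt.continuousWithinAt
    · intro x hx
      rw [interior_Ico] at hx
      have hx0 : 0 < x := hrm0.trans hx.1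
      rw [(hderiv x hx0).deriv]
      have h := ((hsign x hx0).2).2 hx.1
      linarith
  · -- limit at R
    have hval : Lam9 N p R l R = 0 := by
      rw [hLam, show F R = R ^ γ by rw [hFr, hAdef]; ring, hRγδ, sub_self]
    have h := (hderiv R hR).continuousAt.tendsto
    rw [hval] at h
    exact h.mono_left nhdsWithin_le_nhds
  · -- limit at 0, N < p
    intro hcase
    rw [show (p - 1) / (p - (N:ℝ)) = δ from hδdef.symm]
    have hγpos : 0 < γ := by rw [hγdef]; exact div_pos (by linarith) hp1
    have h1 : Tendsto (fun r : ℝ => r ^ γ) (𝓝[>] 0) (𝓝 0) := by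
      have h := (Real.continuousAt_rpow_const 0 γ (Or.inr hγpos.le)).tendsto
      rw [Real.zero_rpow hγpos.ne'] at h
      exact h.mono_left nhdsWithin_le_nhds
    have h2 : Tendsto F (𝓝[>] 0) (𝓝 (l * R ^ γ)) := by
      have h := (h1.const_mul A).add (tendsto_const_nhds (x := l * R ^ γ))
      rw [mul_zero, zero_add] at h
      have : F = fun r : ℝ => A * r ^ γ + l * R ^ γ := funext hFr
      rw [this]
      exact h
    have h3 : Tendsto (fun y : ℝ => y ^ δ) (𝓝 (l * R ^ γ)) (𝓝 ((l * R ^ γ) ^ δ)) :=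
      (Real.continuousAt_rpow_const _ _ (Or.inl (by positivity))).tendsto
    have h4 : Tendsto (Lam9 N p R l) (𝓝[>] 0) (𝓝 ((l * R ^ γ) ^ δ - 0)) := by
      have hfun : Lam9 N p R l = fun r => (F r) ^ δ - r := funext hLam
      rw [hfun]
      exact (h3.comp h2).sub ((continuous_id.tendsto 0).mono_left nhdsWithin_le_nhds)
    have hv : (l * R ^ γ) ^ δ - 0 = l ^ δ * R := by
      rw [Real.mul_rpow hl0.le hRg.le, hRγδ, sub_zero]
    rwa [hv] at h4
  · -- limit at 0, p < N
    intro hcase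
    have hγneg : γ < 0 := by rw [hγdef]; exact div_neg_of_neg_of_pos (by linarith) hp1
    have hδneg : δ < 0 := by rw [hδdef]; exact div_neg_of_pos_of_neg hp1 (by linarith)
    have h0 : Tendsto (fun r : ℝ => r ^ γ) (𝓝[>] 0) atTop := by
      have h1 := (tendsto_rpow_atTop (show (0:ℝ) < -γ by linarith)).comp
        tendsto_inv_nhdsGT_zero
      refine h1.congr' ?_
      filter_upwards [self_mem_nhdsWithin] with r hr
      have hr0 : (0:ℝ) < r := hr
      simp only [Function.comp_apply]
      rw [Real.inv_rpow hr0.le, Real.rpow_neg hr0.le, inv_inv]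
    have h2 : Tendsto F (𝓝[>] 0) atTop := by
      have h := tendsto_atTop_add_const_right _ (l * R ^ γ) (h0.const_mul_atTop hA0)
      have : F = fun r : ℝ => A * r ^ γ + l * R ^ γ := funext hFr
      rw [this]
      exact h
    have h3 : Tendsto (fun r : ℝ => (F r) ^ δ) (𝓝[>] 0) (𝓝 0) := by
      have h := (tendsto_rpow_neg_atTop (show (0:ℝ) < -δ by linarith)).comp h2
      simp only [Function.comp_def, neg_neg] at h
      exact h
    have h4 := h3.sub ((continuous_id.tendsto 0).mono_left nhdsWithin_le_nhds
      (f := fun x : ℝ => x))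
    have hfun : Lam9 N p R l = fun r => (F r) ^ δ - r := funext hLam
    rw [hfun]
    simpa using h4
  · -- part (iv)
    rw [show (1:ℝ) - l = A from hAdef.symm,
      show ((N:ℝ) - p) / ((N:ℝ) - 1) = θ from hθdef.symm,
      show (p - 1) / ((N:ℝ) - 1) = e from hedef.symm,
      show (p - 1) / (p - (N:ℝ)) = δ from hδdef.symm,
      show A ^ θ - A = D from hDdef.symm]
    have h1mAe : (0:ℝ) < 1 - A ^ e := by
      have h : A ^ e < 1 := Real.rpow_lt_one hA0.le hA1 (by rw [hedef]; positivity)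
      linarith
    have hAθe : A ^ θ * A ^ e = A := by
      rw [← Real.rpow_add hA0, hθe, Real.rpow_one]
    have hkey : l * A ^ θ / D = l / (1 - A ^ e) := by
      rw [hDdef, div_eq_div_iff (by rw [← hDdef]; exact hD.ne') h1mAe.ne']
      linear_combination (-l) * hAθe
    have hFrm : F rmax = R ^ γ * (l * A ^ θ / D) := by
      rw [hFr, hrmγ]
      have hD' : D ≠ 0 := hD.ne'
      field_simp
      linear_combination hDdef
    rw [hLam, hFrm, Real.mul_rpow hRg.le (by positivity), hRγδ, hkey, hrmax']
    ring
end
end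

section
/- Let Ω ⊆ ℝ^N be a convex open bounded set, l ∈ (0,1), and ω > 0. Suppose there exist a convex open set D with closure(D) ⊆ Ω and an interior p-capacitary potential v of Ω \ closure(D) such that ‖∇v(x)‖ ≤ ω for all x ∈ Ω \ closure(D). Then dist(x, {v = l}) ≥ l/ω for every x ∈ ∂D; in particular D ∈ 𝓑_{l/ω} and the Bernoulli constant satisfies λ_{Ω,max} ≥ l/ω. -/
open Metric Set Filter MeasureTheory Topology Bornology
open scoped RealInnerProductSpace ENNReal Pointwise

noncomputable section

variable {N : ℕ}

/-- interior `p`-capacitary potential of `Ω \ closure K`: continuous on `closure Ω`,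
`0 ≤ u ≤ 1`, `u = 0` on `closure K`, `u = 1` on `∂Ω`, weakly `p`-harmonic in the ring. -/
def IsIntCapPotential (p : ℝ) (Ω K : Set (Euc N)) (u : Euc N → ℝ) : Prop :=
  ContinuousOn u (closure Ω) ∧ (∀ x, 0 ≤ u x ∧ u x ≤ 1) ∧
    (∀ x ∈ closure K, u x = 0) ∧ (∀ x ∈ frontier Ω, u x = 1) ∧
    WeaklyPHarmonicOn p u (Ω \ closure K)

/-- The class `𝓑_λ` of supersolution cores for the interior problem `(P_I)` in `Ω`. -/
def BClass (p l lam : ℝ) (Ω : Set (Euc N)) : Set (Set (Euc N)) :=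
  {K | Convex ℝ K ∧ IsOpen K ∧ closure K ⊆ Ω ∧
    ∃ u, IsIntCapPotential p Ω K u ∧
      ∀ x ∈ frontier K, lam ≤ infDist x {y | u y = l}}

/-- The Bernoulli constant `λ_{Ω,max} = sup {λ > 0 : 𝓑_λ ≠ ∅}`, computed in `[0,∞]`. -/
def bernoulliConst (p l : ℝ) (Ω : Set (Euc N)) : ℝ≥0∞ :=
  sSup {t : ℝ≥0∞ | ∃ lam : ℝ, 0 < lam ∧ t = ENNReal.ofReal lam ∧ (BClass p l lam Ω).Nonempty}

/-- Composition law for `lineMap`. -/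
lemma lineMap_lineMap_right {E : Type*} [NormedAddCommGroup E] [NormedSpace ℝ E]
    (x y : E) (t c : ℝ) :
    AffineMap.lineMap (AffineMap.lineMap x y t : E) y c
      = AffineMap.lineMap x y (t + c * (1 - t)) := by
  simp only [AffineMap.lineMap_apply_module]
  module

/-- A gradient bound `‖∇v‖ ≤ ω` turns an interior capacitary potential into a supersolution
for the distance problem with `λ = l/ω`, bounding the Bernoulli constant from below. -/
theorem gradient_bound_gives_supersolution
    (N : ℕ) (hN : 2 ≤ N) (p : ℝ) (hp : 1 < p)
    (Ω : Set (Euc N)) (hconv : Convex ℝ Ω) (hopen : IsOpen Ω) (hbdd : IsBounded Ω)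
    (l : ℝ) (hl : l ∈ Set.Ioo (0 : ℝ) 1) (ω : ℝ) (hω : 0 < ω)
    (D : Set (Euc N)) (hDconv : Convex ℝ D) (hDopen : IsOpen D) (hDcl : closure D ⊆ Ω)
    (v : Euc N → ℝ) (hv : IsIntCapPotential p Ω D v)
    (hgrad : ∀ x ∈ Ω \ closure D, ‖gradient v x‖ ≤ ω) :
    (∀ x ∈ frontier D, l / ω ≤ infDist x {y | v y = l}) ∧
    D ∈ BClass p l (l / ω) Ω ∧
    ENNReal.ofReal (l / ω) ≤ bernoulliConst p l Ω := by
  obtain ⟨hl0, hl1⟩ := hl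
  obtain ⟨hcont, h01, hzero, hone, hharm⟩ := hv
  set U : Set (Euc N) := Ω \ closure D with hUdef
  have hUopen : IsOpen U := hopen.sdiff isClosed_closure
  have hC1 : ContDiffOn ℝ 1 v U := hharm.1
  -- Mean value inequality on segments inside `U`.
  have mvt : ∀ a b : Euc N, segment ℝ a b ⊆ U → ‖v b - v a‖ ≤ ω * ‖b - a‖ := by
    intro a b hsub
    refine (convex_segment a b).norm_image_sub_le_of_norm_hasFDerivWithin_le
      (f' := fun z => fderiv ℝ v z) (fun z hz => ?_) (fun z hz => ?_)
      (left_mem_segment ℝ a b) (right_mem_segment ℝ a b)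
    · exact (((hC1.contDiffAt (hUopen.mem_nhds (hsub hz))).differentiableAt
        one_ne_zero).hasFDerivAt).hasFDerivWithinAt
    · have h1 := hgrad z (hsub hz)
      have h2 : ‖gradient v z‖ = ‖fderiv ℝ v z‖ :=
        (InnerProductSpace.toDual ℝ (Euc N)).symm.norm_map _
      linarith
  -- Key estimate for targets inside `Ω`.
  have keyB : ∀ x ∈ closure D, ∀ y ∈ Ω, v y = l → l ≤ ω * dist x y := by
    intro x hxD y hyΩ hyl
    have hxΩ : x ∈ Ω := hDcl hxD
    set S : Set ℝ := Icc (0:ℝ) 1 ∩ (AffineMap.lineMap x y : ℝ →ᵃ[ℝ] Euc N) ⁻¹' closure D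
      with hSdef
    have hSclosed : IsClosed S :=
      isClosed_Icc.inter (isClosed_closure.preimage AffineMap.lineMap_continuous)
    have h0S : (0:ℝ) ∈ S := by
      refine ⟨⟨le_rfl, zero_le_one⟩, ?_⟩
      simpa [AffineMap.lineMap_apply_zero] using hxD
    have hbddS : BddAbove S := ⟨1, fun t ht => ht.1.2⟩
    have hsmem : sSup S ∈ S := hSclosed.csSup_mem ⟨0, h0S⟩ hbddS
    set s₀ : ℝ := sSup S
    have h1S : (1:ℝ) ∉ S := by
      intro h
      have hy0 : v y = 0 := hzero y (by simpa [AffineMap.lineMap_apply_one] using h.2)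
      rw [hyl] at hy0; exact hl0.ne' hy0
    have hs₀lt : s₀ < 1 :=
      lt_of_le_of_ne hsmem.1.2 (fun h => h1S (h ▸ hsmem))
    have hs₀0 : (0:ℝ) ≤ s₀ := hsmem.1.1
    have hnotD : ∀ t ∈ Ioc s₀ 1, AffineMap.lineMap x y t ∉ closure D := by
      intro t ht hmem
      have htS : t ∈ S := ⟨⟨hs₀0.trans ht.1.le, ht.2⟩, hmem⟩
      exact absurd (le_csSup hbddS htS) (not_le.2 ht.1)
    have hseg : ∀ t ∈ Ioc s₀ 1, segment ℝ (AffineMap.lineMap x y t) y ⊆ U := by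
      intro t ht z hz
      rw [segment_eq_image_lineMap] at hz
      obtain ⟨c, hc, rfl⟩ := hz
      rw [lineMap_lineMap_right]
      have hu1 : t + c * (1 - t) ∈ Ioc s₀ 1 := by
        constructor
        · nlinarith [ht.1, ht.2, hc.1, hc.2]
        · nlinarith [ht.2, hc.1, hc.2]
      have huIcc : t + c * (1 - t) ∈ Icc (0:ℝ) 1 := ⟨hs₀0.trans hu1.1.le, hu1.2⟩
      exact ⟨hconv.lineMap_mem hxΩ hyΩ huIcc, hnotD _ hu1⟩
    have hbound : ∀ t ∈ Ioc s₀ 1, l - ω * dist x y ≤ v (AffineMap.lineMap x y t) := by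
      intro t ht
      have h1 := mvt _ y (hseg t ht)
      have h2 : ‖y - AffineMap.lineMap x y t‖ ≤ dist x y := by
        have he : y - AffineMap.lineMap x y t = (1 - t) • (y - x) := by
          simp only [AffineMap.lineMap_apply_module]
          module
        rw [he, norm_smul, Real.norm_eq_abs, dist_eq_norm, ← norm_sub_rev]
        have h1t : |1 - t| ≤ 1 := by
          rw [abs_le]; constructor <;> nlinarith [ht.1, ht.2, hs₀0]
        nlinarith [mul_le_mul_of_nonneg_right h1t (norm_nonneg (x - y))]
      have h3 : ‖v y - v (AffineMap.lineMap x y t)‖ ≤ ω * dist x y :=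
        h1.trans (mul_le_mul_of_nonneg_left h2 hω.le)
      rw [Real.norm_eq_abs, abs_le] at h3
      rw [hyl] at h3
      linarith [h3.2]
    have hg0 : v (AffineMap.lineMap x y s₀) = 0 := hzero _ hsmem.2
    have hgc : ContinuousWithinAt (fun t => v (AffineMap.lineMap x y t)) (Ioc s₀ 1) s₀ := by
      have hmaps : MapsTo (fun t : ℝ => AffineMap.lineMap x y t) (Icc 0 1) (closure Ω) :=
        fun t ht => subset_closure (hconv.lineMap_mem hxΩ hyΩ ht)
      have hco : ContinuousOn (fun t => v (AffineMap.lineMap x y t)) (Icc (0:ℝ) 1) :=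
        hcont.comp AffineMap.lineMap_continuous.continuousOn hmaps
      exact (hco s₀ hsmem.1).mono (fun t ht => ⟨hs₀0.trans ht.1.le, ht.2⟩)
    have htend : Filter.Tendsto (fun t => v (AffineMap.lineMap x y t)) (𝓝[Ioc s₀ 1] s₀)
        (𝓝 (v (AffineMap.lineMap x y s₀))) := hgc
    rw [hg0] at htend
    haveI := left_nhdsWithin_Ioc_neBot hs₀lt
    have hfin : l - ω * dist x y ≤ 0 :=
      ge_of_tendsto htend (Filter.eventually_of_mem self_mem_nhdsWithin hbound)
    linarith
  -- Crossing lemma: from a zero of `v` in `Ω` towards a point outside `closure Ω`,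
  -- the potential attains the value `l` inside `Ω`, no farther away.
  have keyC : ∀ x ∈ Ω, v x = 0 → ∀ y : Euc N, y ∉ closure Ω →
      ∃ z ∈ Ω, v z = l ∧ dist x z ≤ dist x y := by
    intro x hxΩ hvx y hy
    set T : Set ℝ := Icc (0:ℝ) 1 ∩ (AffineMap.lineMap x y : ℝ →ᵃ[ℝ] Euc N) ⁻¹' closure Ω
      with hTdef
    have hTconv : Convex ℝ T :=
      (convex_Icc _ _).inter (hconv.closure.affine_preimage _)
    have hTclosed : IsClosed T :=
      isClosed_Icc.inter (isClosed_closure.preimage AffineMap.lineMap_continuous)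
    have h0T : (0:ℝ) ∈ T := by
      refine ⟨⟨le_rfl, zero_le_one⟩, ?_⟩
      simpa [AffineMap.lineMap_apply_zero] using subset_closure hxΩ
    have hbddT : BddAbove T := ⟨1, fun t ht => ht.1.2⟩
    have hτmem : sSup T ∈ T := hTclosed.csSup_mem ⟨0, h0T⟩ hbddT
    set τ : ℝ := sSup T
    have h1T : (1:ℝ) ∉ T := by
      intro h
      exact hy (by simpa [AffineMap.lineMap_apply_one] using h.2)
    have hτlt : τ < 1 := lt_of_le_of_ne hτmem.1.2 (fun h => h1T (h ▸ hτmem))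
    have hτ0 : (0:ℝ) ≤ τ := hτmem.1.1
    have hfr : AffineMap.lineMap x y τ ∈ frontier Ω := by
      refine ⟨hτmem.2, ?_⟩
      rw [hopen.interior_eq]
      intro hΩmem
      have hnb : (AffineMap.lineMap x y : ℝ →ᵃ[ℝ] Euc N) ⁻¹' Ω ∈ 𝓝 τ :=
        (hopen.preimage AffineMap.lineMap_continuous).mem_nhds hΩmem
      haveI := left_nhdsWithin_Ioc_neBot hτlt
      have hev : ∀ᶠ t in 𝓝[Ioc τ 1] τ, AffineMap.lineMap x y t ∈ Ω :=
        Filter.eventually_iff_exists_mem.2 ⟨_, nhdsWithin_le_nhds hnb, fun t ht => ht⟩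
      obtain ⟨t, htΩ, htI⟩ := (hev.and (Filter.eventually_of_mem self_mem_nhdsWithin
        (fun t ht => ht))).exists
      have : t ∈ T := ⟨⟨hτ0.trans htI.1.le, htI.2⟩, subset_closure htΩ⟩
      exact absurd (le_csSup hbddT this) (not_le.2 htI.1)
    have hvτ : v (AffineMap.lineMap x y τ) = 1 := hone _ hfr
    have hmaps : MapsTo (fun t : ℝ => AffineMap.lineMap x y t) (Icc 0 τ) (closure Ω) := by
      intro t ht
      exact (hTconv.ordConnected.out h0T hτmem ⟨ht.1, ht.2⟩).2
    have hgcont : ContinuousOn (fun t => v (AffineMap.lineMap x y t)) (Icc 0 τ) :=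
      hcont.comp AffineMap.lineMap_continuous.continuousOn hmaps
    have hlmem : l ∈ (fun t => v (AffineMap.lineMap x y t)) '' Icc 0 τ := by
      apply intermediate_value_Icc hτ0 hgcont
      constructor
      · simpa [AffineMap.lineMap_apply_zero, hvx] using hl0.le
      · simpa [hvτ] using hl1.le
    obtain ⟨t, htI, hgt0⟩ := hlmem
    have hgt : v (AffineMap.lineMap x y t) = l := hgt0
    have hzcl : AffineMap.lineMap x y t ∈ closure Ω := hmaps htI
    have hzΩ : AffineMap.lineMap x y t ∈ Ω := by
      by_contra h
      have hfr' : AffineMap.lineMap x y t ∈ frontier Ω := by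
        refine ⟨hzcl, ?_⟩
        rwa [hopen.interior_eq]
      have := hone _ hfr'
      rw [hgt] at this
      exact hl1.ne this
    refine ⟨AffineMap.lineMap x y t, hzΩ, hgt, ?_⟩
    have he : x - AffineMap.lineMap x y t = t • (x - y) := by
      simp only [AffineMap.lineMap_apply_module]
      module
    rw [dist_eq_norm, dist_eq_norm, he, norm_smul, Real.norm_eq_abs,
      abs_of_nonneg htI.1]
    nlinarith [norm_nonneg (x - y), htI.2, hτlt, htI.1]
  -- A point outside `closure Ω` exists since `Ω` is bounded.
  obtain ⟨y₀, hy₀⟩ : ∃ y : Euc N, y ∉ closure Ω := by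
    obtain ⟨R, hR⟩ := (isBounded_iff_subset_closedBall 0).1 hbdd
    refine ⟨(|R| + 1) • EuclideanSpace.single (⟨0, by omega⟩ : Fin N) (1:ℝ), fun h => ?_⟩
    have hc : closure Ω ⊆ closedBall 0 R := closure_minimal hR Metric.isClosed_closedBall
    have hmem := hc h
    rw [mem_closedBall, dist_zero_right, norm_smul, EuclideanSpace.norm_single,
      Real.norm_eq_abs] at hmem
    have : |R| + 1 ≤ R := by
      have h1 : |(|R| + 1)| = |R| + 1 := abs_of_nonneg (by positivity)
      rw [h1] at hmem
      simpa using hmem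
    have := abs_nonneg R
    have := le_abs_self R
    linarith
  -- Main estimate.
  have main : ∀ x ∈ frontier D, l / ω ≤ infDist x {y | v y = l} := by
    intro x hx
    have hxD : x ∈ closure D := frontier_subset_closure hx
    have hxΩ : x ∈ Ω := hDcl hxD
    have hvx : v x = 0 := hzero x hxD
    obtain ⟨z₀, hz₀Ω, hz₀l, _⟩ := keyC x hxΩ hvx y₀ hy₀
    have hne : {y | v y = l}.Nonempty := ⟨z₀, hz₀l⟩
    by_contra hcon
    push_neg at hcon
    obtain ⟨y, hyl, hylt⟩ := (infDist_lt_iff hne).1 hcon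
    have hkey : l ≤ ω * dist x y := by
      by_cases hyΩ : y ∈ Ω
      · exact keyB x hxD y hyΩ hyl
      · by_cases hycl : y ∈ closure Ω
        · have hfr' : y ∈ frontier Ω := ⟨hycl, by rwa [hopen.interior_eq]⟩
          have h1 := hone y hfr'
          rw [hyl] at h1
          exact absurd h1 hl1.ne
        · obtain ⟨z, hzΩ, hzl, hzd⟩ := keyC x hxΩ hvx y hycl
          exact (keyB x hxD z hzΩ hzl).trans (mul_le_mul_of_nonneg_left hzd hω.le)
    have hd : l / ω ≤ dist x y := by
      rw [div_le_iff₀ hω]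
      linarith [mul_comm ω (dist x y)]
    linarith
  have hB : D ∈ BClass p l (l / ω) Ω :=
    ⟨hDconv, hDopen, hDcl, v, ⟨hcont, h01, hzero, hone, hharm⟩, main⟩
  exact ⟨main, hB, le_sSup ⟨l / ω, div_pos hl0 hω, rfl, ⟨D, hB⟩⟩⟩
end
end
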